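/- Let $\Delta$ be a pure $d$-dimensional simplicial complex with shelling order $F_1,\ldots,F_m$ and restriction faces $R(F_j)$. Then for every $0\le i\le d+1$, $h_i(\Delta)=|\{1\le j\le m: |R(F_j)|=i\}|$. -/

import Mathlib

namespace Paper

/-- Ambient vertex type in dimension `d`: original vertices `0,…,d+1` (left)
and new vertices `v_0,…,v_d` (right). -/
abbrev V (d : ℕ) := Sum (Fin (d+2)) (Fin (d+1))

def origV (d m : ℕ) : V d := Sum.inl ⟨m % (d+2), Nat.mod_lt m (by omega)⟩
def newV (d m : ℕ) : V d := Sum.inr ⟨m % (d+1), Nat.mod_lt m (by omega)⟩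

variable {W : Type*} [DecidableEq W] {W' : Type*} [DecidableEq W']

def IsComplex (Δ : Set (Finset W)) : Prop := ∀ F ∈ Δ, ∀ G, G ⊆ F → G ∈ Δ

def isFacet (Δ : Set (Finset W)) (F : Finset W) : Prop :=
  F ∈ Δ ∧ ∀ G ∈ Δ, F ⊆ G → G = F

def simplexOn (A : Finset W) : Set (Finset W) := {F | F ⊆ A}

def bdrySimplex (A : Finset W) : Set (Finset W) := {F | F ⊂ A}

def joinC (Δ Γ : Set (Finset W)) : Set (Finset W) := {s | ∃ a ∈ Δ, ∃ b ∈ Γ, s = a ∪ b}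

def lkC (Δ : Set (Finset W)) (F : Finset W) : Set (Finset W) :=
  {G | Disjoint F G ∧ F ∪ G ∈ Δ}

def delFace (Δ : Set (Finset W)) (F : Finset W) : Set (Finset W) := {G ∈ Δ | ¬ F ⊆ G}

/-- Stellar subdivision at `F` with new vertex `v`. -/
def sdC (v : W) (F : Finset W) (Δ : Set (Finset W)) : Set (Finset W) :=
  delFace Δ F ∪ joinC (simplexOn {v}) (joinC (bdrySimplex F) (lkC Δ F))

/-- Deletion of a subcomplex: the complex generated by the facets of `Δ`
that are not facets of `Γ`. -/
def delSub (Δ Γ : Set (Finset W)) : Set (Finset W) :=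
  {G | ∃ F, isFacet Δ F ∧ ¬ isFacet Γ F ∧ G ⊆ F}

def IsInduced (Γ Δ : Set (Finset W)) : Prop :=
  Γ ⊆ Δ ∧ ∀ F ∈ Δ, (∀ v ∈ F, ({v} : Finset W) ∈ Γ) → F ∈ Γ

/-- Simplicial isomorphism (via a permutation of the ambient vertex set). -/
def IsoC (Δ Γ : Set (Finset W)) : Prop :=
  ∃ e : Equiv.Perm W, ∀ F : Finset W, F ∈ Δ ↔ F.image (⇑e) ∈ Γ

def mapC (f : W → W') (Δ : Set (Finset W)) : Set (Finset W') := {F | ∃ G ∈ Δ, F = G.image f}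

/-- Number of faces of cardinality `i` (i.e. dimension `i-1`). -/
noncomputable def fnum (Δ : Set (Finset W)) (i : ℕ) : ℕ := {F | F ∈ Δ ∧ F.card = i}.ncard

/-- `h`-numbers of a `d`-dimensional complex. -/
noncomputable def hnum (d : ℕ) (Δ : Set (Finset W)) (j : ℕ) : ℤ :=
  ∑ i ∈ Finset.range (j+1),
    (-1 : ℤ)^(j-i) * ((d+1-i).choose (d+1-j) : ℤ) * (fnum Δ i : ℤ)

/-- `R` is the restriction face of the `i`-th facet of the ordering `L`. -/
def IsRestriction (L : List (Finset W)) (i : ℕ) (R : Finset W) : Prop :=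
  R ⊆ L.getD i ∅ ∧ (∀ j < i, ¬ R ⊆ L.getD j ∅) ∧
    ∀ G ⊆ L.getD i ∅, (∀ j < i, ¬ G ⊆ L.getD j ∅) → R ⊆ G

def IsShelling (Δ : Set (Finset W)) (L : List (Finset W)) : Prop :=
  L.Nodup ∧ (∀ F, F ∈ L ↔ isFacet Δ F) ∧ ∀ i < L.length, ∃ R, IsRestriction L i R

def Shellable (Δ : Set (Finset W)) : Prop := ∃ L, IsShelling Δ L

def IsRelRestriction (Sg : Set (Finset W)) (L : List (Finset W)) (i : ℕ) (R : Finset W) : Prop :=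
  R ⊆ L.getD i ∅ ∧ R ∉ Sg ∧ (∀ j < i, ¬ R ⊆ L.getD j ∅) ∧
    ∀ G ⊆ L.getD i ∅, G ∉ Sg → (∀ j < i, ¬ G ⊆ L.getD j ∅) → R ⊆ G

/-- Shelling of the relative complex `(Δ, Sg)`. -/
def IsRelShelling (Δ Sg : Set (Finset W)) (L : List (Finset W)) : Prop :=
  L.Nodup ∧ (∀ F, F ∈ L ↔ (isFacet Δ F ∧ F ∉ Sg)) ∧
    ∀ i < L.length, ∃ R, IsRelRestriction Sg L i R

/-- The facet of the `(d+1)`-simplex on `{0,…,d+1}` omitting vertex `i`. -/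
def Gface (d i : ℕ) : Finset (V d) :=
  ((Finset.range (d+2)).filter (fun j => j ≠ i)).image (origV d)

def GammaC (d i : ℕ) : Set (Finset (V d)) := simplexOn (Gface d i)

def GammaU (d : ℕ) (I : Finset ℕ) : Set (Finset (V d)) := {F | ∃ i ∈ I, F ⊆ Gface d i}

/-- The face `F_i = {i+1,…,d+1}` subdivided by the diamond operation. -/
def Fsub (d i : ℕ) : Finset (V d) := (Finset.Ioc i (d+1)).image (origV d)

/-- The diamond operation: successive stellar subdivisions at `F_0, F_1, …, F_d`
with new vertices `v_0,…,v_d` (subdivision at a non-face has no effect). -/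
def Diam (d : ℕ) (Δ : Set (Finset (V d))) : Set (Finset (V d)) :=
  (List.range (d+1)).foldl (fun Γ i => sdC (newV d i) (Fsub d i) Γ) Δ

def DiamU (d : ℕ) (I : Finset ℕ) : Set (Finset (V d)) := Diam d (GammaU d I)

/-- Boundary complex of the cross-polytope on the vertex pairs `{j, v_j}`, `j ∈ S`. -/
def crossN (d : ℕ) (S : Finset ℕ) : Set (Finset (V d)) :=
  {F | (∀ x ∈ F, ∃ j ∈ S, x = origV d j ∨ x = newV d j) ∧
       ∀ j ∈ S, ¬ (origV d j ∈ F ∧ newV d j ∈ F)}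

/-- Boundary complex: generated by the faces of cardinality `n` contained in
exactly one facet. -/
def bdryC (n : ℕ) (Δ : Set (Finset W)) : Set (Finset W) :=
  {G | ∃ F, G ⊆ F ∧ F ∈ Δ ∧ F.card = n ∧ ∃! H, isFacet Δ H ∧ F ⊆ H}

/-- Positions in `P` at which `G` differs from the reference facet `F0`. -/
def diffSet (d : ℕ) (P : Finset ℕ) (F0 G : Finset (V d)) : Finset ℕ :=
  P.filter (fun j => decide (origV d j ∈ G) ≠ decide (origV d j ∈ F0))

/-- Degree lexicographic comparison of characteristic (difference) sets. -/
def dlexLT (D D' : Finset ℕ) : Prop :=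
  D.card < D'.card ∨
    (D.card = D'.card ∧ ∃ m, m ∉ D ∧ m ∈ D' ∧ ∀ j < m, (j ∈ D ↔ j ∈ D'))

/-- `L` lists the facets of `Δ` in degree lexicographic order w.r.t. `F0`. -/
def IsDegLexOrder (d : ℕ) (P : Finset ℕ) (Δ : Set (Finset (V d)))
    (F0 : Finset (V d)) (L : List (Finset (V d))) : Prop :=
  L.Nodup ∧ (∀ F, F ∈ L ↔ isFacet Δ F) ∧
    L.Pairwise (fun G G' => dlexLT (diffSet d P F0 G) (diffSet d P F0 G'))

/-- Vertices of `F` sitting at the positions in `D`. -/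
def posVerts (d : ℕ) (F : Finset (V d)) (D : Finset ℕ) : Finset (V d) :=
  F.filter (fun x => ∃ j ∈ D, x = origV d j ∨ x = newV d j)

def IsoN (Δ Γ : Set (Finset ℕ)) : Prop :=
  ∃ e : Equiv.Perm ℕ, ∀ F : Finset ℕ, F ∈ Δ ↔ F.image (⇑e) ∈ Γ

def StellarMove (Δ Γ : Set (Finset ℕ)) : Prop :=
  ∃ (F : Finset ℕ) (v : ℕ), F ∈ Δ ∧ F ≠ ∅ ∧ (∀ G ∈ Δ, v ∉ G) ∧ Γ = sdC v F Δ

/-- PL homeomorphism of simplicial complexes, encoded via Alexander's theorem as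
stellar equivalence: the equivalence relation generated by stellar subdivisions
(and their inverses, the welds) together with simplicial isomorphisms. -/
def PLHomeo (Δ Γ : Set (Finset ℕ)) : Prop :=
  Relation.EqvGen (fun A B => StellarMove A B ∨ IsoN A B) Δ Γ

def encV (d : ℕ) : V d → ℕ := Sum.elim (fun j => 2 * j.val) (fun j => 2 * j.val + 1)

def toN (d : ℕ) (Δ : Set (Finset (V d))) : Set (Finset ℕ) := mapC (encV d) Δ

def ballN (c : ℕ) : Set (Finset ℕ) := {F | F ⊆ Finset.range c}

def sphereN (c : ℕ) : Set (Finset ℕ) := {F | F ⊂ Finset.range (c+1)}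

/-- `Δ` is a combinatorial ball of dimension `c-1` (a `(c-1)`-simplex has `c` vertices). -/
def IsCombBall (d c : ℕ) (Δ : Set (Finset (V d))) : Prop := PLHomeo (toN d Δ) (ballN c)

/-- `Δ` is a combinatorial sphere of dimension `c-1`. -/
def IsCombSphere (d c : ℕ) (Δ : Set (Finset (V d))) : Prop := PLHomeo (toN d Δ) (sphereN c)

def ConnC (Δ : Set (Finset W)) : Prop :=
  ∀ u v : W, ({u} : Finset W) ∈ Δ → ({v} : Finset W) ∈ Δ →
    Relation.ReflTransGen (fun a b => ({a, b} : Finset W) ∈ Δ) u v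

/-- Combinatorial `d`-manifold (possibly with boundary): connected, pure, and all
links of nonempty faces are combinatorial balls or spheres of dimension `d - |F|`. -/
def IsCombManifold (d : ℕ) (Δ : Set (Finset (V d))) : Prop :=
  IsComplex Δ ∧ (∅ : Finset (V d)) ∈ Δ ∧ ConnC Δ ∧
  (∀ F ∈ Δ, ∃ G, isFacet Δ G ∧ F ⊆ G ∧ G.card = d+1) ∧
  ∀ F ∈ Δ, F ≠ (∅ : Finset (V d)) →
    (IsCombBall d (d+1-F.card) (lkC Δ F) ∨ IsCombSphere d (d+1-F.card) (lkC Δ F))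

def liftV (d : ℕ) : V d → V (d+1) := Sum.map Fin.castSucc Fin.castSucc

/-- The relabeling `π : i ↦ i+1`, `v_i ↦ v_{i+1}`. -/
def piV (d : ℕ) : V d → V (d+1) := Sum.map Fin.succ Fin.succ

/-- The relabeling `ρ : i ↦ i-1`, `v_i ↦ v_{i-1}` (indices mod `d+1`). -/
def rhoV (d : ℕ) : V d → V d := fun x =>
  match x with
  | Sum.inl j => origV d ((j.val + d) % (d+1))
  | Sum.inr j => newV d ((j.val + d) % (d+1))

/-- `ψ` swaps the vertices `d` and `v_d`. -/
def psiV (d : ℕ) : V d → V d := fun x => Equiv.swap (origV d d) (newV d d) x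

def sigmaV (d : ℕ) : V d → V d := psiV d ∘ rhoV d

/-- `Δ` is (isomorphic to) the boundary complex of the `(d+1)`-dimensional
cross-polytope. -/
def IsCrossBdry (d : ℕ) (Δ : Set (Finset W)) : Prop :=
  ∃ f : Fin (d+1) × Bool → W, Function.Injective f ∧
    Δ = {F | (∀ v ∈ F, ∃ p, v = f p) ∧
             ∀ j : Fin (d+1), ¬ (f (j, true) ∈ F ∧ f (j, false) ∈ F)}

/-- `Sg` is a connected sum of `Δ` and `Γ`: they meet exactly in the full simplex
on a common facet `F`, which is removed. -/
def IsConnSum (Δ Γ Sg : Set (Finset W)) : Prop :=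
  ∃ F : Finset W, isFacet Δ F ∧ isFacet Γ F ∧ Δ ∩ Γ = simplexOn F ∧ Sg = (Δ ∪ Γ) \ {F}

/-- Connected sum of `m+1` copies of the boundary of the `(d+1)`-cross-polytope. -/
def IsCrossStacked (d : ℕ) : ℕ → Set (Finset W) → Prop
  | 0, Δ => IsCrossBdry d Δ
  | (m+1), Δ => ∃ A B : Set (Finset W), IsCrossStacked d m A ∧ IsCrossBdry d B ∧ IsConnSum A B Δ

/-- The initial facet of the block `Diam(Γ_{iℓ})` (for block index `ℓ ≥ 1`;
block `0` uses the facet `G0` meeting the boundary). -/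
def initFacet (d i1 iℓ : ℕ) (G0 : Finset (V d)) (ℓ : ℕ) : Finset (V d) :=
  if ℓ = 0 then G0
  else ((Finset.range iℓ).image (origV d)) ∪ {newV d iℓ} ∪
       ((Finset.Ioo iℓ (max i1 iℓ)).image (origV d)) ∪
       ((Finset.Icc (max i1 iℓ) d).image (newV d))


/-- Inner alternating binomial identity. -/
lemma inner_id (n t : ℕ) (ht : t ≤ n) :
    ∑ s ∈ Finset.range (t+1), (-1:ℤ)^(t-s) * ((n-s).choose (n-t) : ℤ) * (n.choose s : ℤ)
      = if t = 0 then 1 else 0 := by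
  have h1 : ∀ s ∈ Finset.range (t+1),
      (-1:ℤ)^(t-s) * ((n-s).choose (n-t) : ℤ) * (n.choose s : ℤ)
        = ((-1:ℤ)^t * (n.choose t : ℤ)) * ((-1:ℤ)^s * (t.choose s : ℤ)) := by
    intro s hs
    rw [Finset.mem_range] at hs
    have hst : s ≤ t := by omega
    have e1 : (n-s).choose (n-t) = (n-s).choose (t-s) := by
      have h : n - t = (n-s) - ((n-s) - (n - t)) := by omega
      rw [h, Nat.choose_symm (by omega)]
      congr 1
      omega
    have e2 : n.choose s * (n-s).choose (t-s) = n.choose t * t.choose s :=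
      (Nat.choose_mul hst).symm
    have e2' : (n.choose s : ℤ) * ((n-s).choose (t-s) : ℤ)
        = (n.choose t : ℤ) * (t.choose s : ℤ) := by exact_mod_cast congrArg (Nat.cast (R := ℤ)) e2
    have e3 : (-1:ℤ)^(t-s) * (-1:ℤ)^s = (-1:ℤ)^t := by
      rw [← pow_add]
      congr 1
      omega
    have e4 : (-1:ℤ)^s * (-1:ℤ)^s = 1 := by
      rw [← pow_add]
      exact Even.neg_one_pow ⟨s, rfl⟩
    rw [e1]
    linear_combination ((-1:ℤ)^(t-s)) * e2'
      - ((-1:ℤ)^(t-s) * (n.choose t : ℤ) * (t.choose s : ℤ)) * e4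
      + ((-1:ℤ)^s * (n.choose t : ℤ) * (t.choose s : ℤ)) * e3
  rw [Finset.sum_congr rfl h1, ← Finset.mul_sum, Int.alternating_sum_range_choose]
  by_cases h0 : t = 0 <;> simp [h0]

/-- Key alternating binomial identity underlying the `h`-number computation. -/
lemma key_id (d i r : ℕ) (hi : i ≤ d+1) (hr : r ≤ d+1) :
    ∑ k ∈ Finset.range (i+1), (-1:ℤ)^(i-k) * ((d+1-k).choose (d+1-i) : ℤ) *
      (if r ≤ k then ((d+1-r).choose (k-r) : ℤ) else 0)
      = if r = i then 1 else 0 := by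
  by_cases hri : r ≤ i
  · have hzero : ∀ k ∈ Finset.range r,
        (-1:ℤ)^(i-k) * ((d+1-k).choose (d+1-i) : ℤ) *
          (if r ≤ k then ((d+1-r).choose (k-r) : ℤ) else 0) = 0 := by
      intro k hk
      rw [Finset.mem_range] at hk
      rw [if_neg (by omega)]
      ring
    have hsplit := Finset.sum_range_add_sum_Ico
      (f := fun k => (-1:ℤ)^(i-k) * ((d+1-k).choose (d+1-i) : ℤ) *
        (if r ≤ k then ((d+1-r).choose (k-r) : ℤ) else 0)) (m := r) (n := i+1) (by omega)
    rw [← hsplit, Finset.sum_eq_zero hzero, zero_add,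
      Finset.sum_Ico_eq_sum_range]
    have hlen : i + 1 - r = (i - r) + 1 := by omega
    rw [hlen]
    have hcong : ∀ s ∈ Finset.range ((i-r)+1),
        (-1:ℤ)^(i-(r+s)) * ((d+1-(r+s)).choose (d+1-i) : ℤ) *
          (if r ≤ r+s then (((d+1-r)).choose ((r+s)-r) : ℤ) else 0)
        = (-1:ℤ)^((i-r)-s) * (((d+1-r)-s).choose ((d+1-r)-(i-r)) : ℤ) * ((d+1-r).choose s : ℤ) := by
      intro s hs
      rw [Finset.mem_range] at hs
      rw [if_pos (by omega)]
      have a1 : i - (r+s) = (i-r) - s := by omega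
      have a2 : d+1-(r+s) = (d+1-r) - s := by omega
      have a3 : (r+s) - r = s := by omega
      have a4 : d+1-i = (d+1-r)-(i-r) := by omega
      rw [a1, a2, a3, a4]
    rw [Finset.sum_congr rfl hcong, inner_id (d+1-r) (i-r) (by omega)]
    by_cases h : r = i
    · rw [if_pos (by omega), if_pos h]
    · rw [if_neg (by omega), if_neg h]
  · rw [if_neg (by omega)]
    apply Finset.sum_eq_zero
    intro k hk
    rw [Finset.mem_range] at hk
    rw [if_neg (by omega)]
    ring

/-- Number of sets of size `k` in the interval `[R, F]`. -/
lemma card_Icc_filter_card {W : Type*} [DecidableEq W] (R F : Finset W) (h : R ⊆ F) (k : ℕ) :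
    ((Finset.Icc R F).filter (fun G => G.card = k)).card =
      if R.card ≤ k then (F.card - R.card).choose (k - R.card) else 0 := by
  by_cases hk : R.card ≤ k
  · rw [if_pos hk, ← Finset.card_sdiff_of_subset h, ← Finset.card_powersetCard (k - R.card) (F \ R)]
    apply Finset.card_bij' (fun G _ => G \ R) (fun S _ => S ∪ R)
    · intro G hG
      simp only [Finset.mem_filter, Finset.mem_Icc, Finset.le_eq_subset] at hG
      rw [Finset.mem_powersetCard]
      exact ⟨Finset.sdiff_subset_sdiff hG.1.2 Finset.Subset.rfl,
        by rw [Finset.card_sdiff_of_subset hG.1.1, hG.2]⟩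
    · intro S hS
      rw [Finset.mem_powersetCard] at hS
      have hdisj : Disjoint S R := Finset.disjoint_of_subset_left hS.1 Finset.sdiff_disjoint
      simp only [Finset.mem_filter, Finset.mem_Icc, Finset.le_eq_subset]
      refine ⟨⟨Finset.subset_union_right, Finset.union_subset (hS.1.trans Finset.sdiff_subset) h⟩, ?_⟩
      rw [Finset.card_union_of_disjoint hdisj, hS.2]
      omega
    · intro G hG
      simp only [Finset.mem_filter, Finset.mem_Icc, Finset.le_eq_subset] at hG
      exact Finset.sdiff_union_of_subset hG.1.1
    · intro S hS
      rw [Finset.mem_powersetCard] at hS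
      exact Finset.union_sdiff_cancel_right
        (Finset.disjoint_of_subset_left hS.1 Finset.sdiff_disjoint)
  · rw [if_neg hk, Finset.card_eq_zero, Finset.filter_eq_empty_iff]
    intro G hG
    rw [Finset.mem_Icc] at hG
    have := Finset.card_le_card hG.1
    omega

/-- the `h`-numbers of a shellable pure complex count restriction
faces of each cardinality. -/
theorem stmt14 {W : Type*} [DecidableEq W] [Fintype W] (d : ℕ) (Δ : Set (Finset W))
    (hcx : IsComplex Δ) (hpure : ∀ F, isFacet Δ F → F.card = d+1)
    (L : List (Finset W)) (hL : IsShelling Δ L)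
    (R : ℕ → Finset W) (hR : ∀ j < L.length, IsRestriction L j (R j)) :
    ∀ i ≤ d+1,
      hnum d Δ i =
        (((Finset.range L.length).filter (fun j => (R j).card = i)).card : ℤ) := by
  classical
  intro i hi
  set m := L.length with hm
  set Fc : ℕ → Finset W := fun j => L.getD j ∅ with hFc
  have hmem : ∀ j, j < m → Fc j ∈ L := by
    intro j hj
    rw [hFc]
    simp only
    rw [List.getD_eq_getElem L ∅ hj]
    exact List.getElem_mem hj
  have hfac : ∀ j, j < m → isFacet Δ (Fc j) := fun j hj => (hL.2.1 _).1 (hmem j hj)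
  have hcard : ∀ j, j < m → (Fc j).card = d+1 := fun j hj => hpure _ (hfac j hj)
  have hRsub : ∀ j, j < m → R j ⊆ Fc j := fun j hj => (hR j hj).1
  have hRcard : ∀ j, j < m → (R j).card ≤ d+1 := fun j hj => by
    have := Finset.card_le_card (hRsub j hj)
    rw [hcard j hj] at this
    exact this
  -- uniqueness of the interval containing a face
  have huniq : ∀ j1, j1 < m → ∀ j2, j2 < m → ∀ G : Finset W,
      R j1 ⊆ G → G ⊆ Fc j1 → R j2 ⊆ G → G ⊆ Fc j2 → j1 = j2 := by
    intro j1 h1 j2 h2 G a1 b1 a2 b2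
    by_contra hne
    rcases Nat.lt_or_ge j1 j2 with hlt | hge
    · exact (hR j2 h2).2.1 j1 hlt (a2.trans b1)
    · have hlt : j2 < j1 := by omega
      exact (hR j1 h1).2.1 j2 hlt (a1.trans b2)
  -- existence
  have hex : ∀ G : Finset W, G ∈ Δ → ∃ j, j < m ∧ R j ⊆ G ∧ G ⊆ Fc j := by
    intro G hG
    obtain ⟨H, hH, hmax⟩ := Finset.exists_max_image
      (Finset.univ.filter (fun H => H ∈ Δ ∧ G ⊆ H)) Finset.card
      ⟨G, by simp [hG]⟩
    rw [Finset.mem_filter] at hH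
    have hfH : isFacet Δ H := by
      refine ⟨hH.2.1, fun K hK hsub => ?_⟩
      have hKmem : K ∈ Finset.univ.filter (fun H => H ∈ Δ ∧ G ⊆ H) := by
        simp [hK, hH.2.2.trans hsub]
      exact (Finset.eq_of_subset_of_card_le hsub (hmax K hKmem)).symm
    have hHL : H ∈ L := (hL.2.1 H).2 hfH
    obtain ⟨j, hj, hje⟩ := List.mem_iff_getElem.1 hHL
    have hpj : ∃ k, k < m ∧ G ⊆ Fc k := by
      refine ⟨j, hj, ?_⟩
      rw [hFc]
      simp only
      rw [List.getD_eq_getElem L ∅ hj, hje]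
      exact hH.2.2
    set j0 := Nat.find hpj with hj0
    obtain ⟨hj0m, hj0sub⟩ := Nat.find_spec hpj
    refine ⟨j0, hj0m, ?_, hj0sub⟩
    refine (hR j0 hj0m).2.2 G hj0sub (fun k hk hsub => ?_)
    exact (Nat.find_min hpj hk) ⟨by omega, hsub⟩
  -- f-numbers via the interval partition
  have hfnum : ∀ k : ℕ, (fnum Δ k : ℤ) =
      ∑ j ∈ Finset.range m,
        (if (R j).card ≤ k then ((d+1-(R j).card).choose (k-(R j).card) : ℤ) else 0) := by
    intro k
    have hset : {F | F ∈ Δ ∧ F.card = k} =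
        ↑((Finset.range m).biUnion
          (fun j => (Finset.Icc (R j) (Fc j)).filter (fun G => G.card = k))) := by
      ext G
      simp only [Set.mem_setOf_eq, Finset.coe_biUnion, Set.mem_iUnion, Finset.mem_coe,
        Finset.mem_filter, Finset.mem_Icc, Finset.mem_range, Finset.le_eq_subset]
      constructor
      · rintro ⟨hG, hGk⟩
        obtain ⟨j, hj, hRG, hGF⟩ := hex G hG
        exact ⟨j, hj, ⟨hRG, hGF⟩, hGk⟩
      · rintro ⟨j, hj, ⟨hRG, hGF⟩, hGk⟩
        exact ⟨hcx _ (hfac j hj).1 G hGF, hGk⟩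
    have hdisj : ∀ j1 ∈ Finset.range m, ∀ j2 ∈ Finset.range m, j1 ≠ j2 →
        Disjoint ((Finset.Icc (R j1) (Fc j1)).filter (fun G => G.card = k))
          ((Finset.Icc (R j2) (Fc j2)).filter (fun G => G.card = k)) := by
      intro j1 h1 j2 h2 hne
      rw [Finset.mem_range] at h1 h2
      rw [Finset.disjoint_left]
      intro G hG1 hG2
      simp only [Finset.mem_filter, Finset.mem_Icc, Finset.le_eq_subset] at hG1 hG2
      exact hne (huniq j1 h1 j2 h2 G hG1.1.1 hG1.1.2 hG2.1.1 hG2.1.2)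
    rw [fnum, hset, Set.ncard_coe_finset, Finset.card_biUnion hdisj]
    push_cast
    refine Finset.sum_congr rfl (fun j hj => ?_)
    rw [Finset.mem_range] at hj
    rw [card_Icc_filter_card (R j) (Fc j) (hRsub j hj) k, hcard j hj]
    split <;> simp
  -- assemble
  rw [hnum]
  calc ∑ k ∈ Finset.range (i+1),
        (-1 : ℤ)^(i-k) * ((d+1-k).choose (d+1-i) : ℤ) * (fnum Δ k : ℤ)
      = ∑ k ∈ Finset.range (i+1), ∑ j ∈ Finset.range m,
          (-1 : ℤ)^(i-k) * ((d+1-k).choose (d+1-i) : ℤ) *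
            (if (R j).card ≤ k then ((d+1-(R j).card).choose (k-(R j).card) : ℤ) else 0) := by
        refine Finset.sum_congr rfl (fun k _ => ?_)
        rw [hfnum k, Finset.mul_sum]
    _ = ∑ j ∈ Finset.range m, ∑ k ∈ Finset.range (i+1),
          (-1 : ℤ)^(i-k) * ((d+1-k).choose (d+1-i) : ℤ) *
            (if (R j).card ≤ k then ((d+1-(R j).card).choose (k-(R j).card) : ℤ) else 0) :=
        Finset.sum_comm
    _ = ∑ j ∈ Finset.range m, (if (R j).card = i then (1:ℤ) else 0) := by
        refine Finset.sum_congr rfl (fun j hj => ?_)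
        rw [Finset.mem_range] at hj
        exact key_id d i ((R j).card) hi (hRcard j hj)
    _ = (((Finset.range m).filter (fun j => (R j).card = i)).card : ℤ) := by
        rw [Finset.sum_boole]

end Paper
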